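/- arXiv:2107.13794 — 3 statements merged into one kernel-verified Lean document; each statement's English description precedes it below -/
import Mathlib

section
/- Let A(t) be an invertible matrix-valued differentiable function of t and ν a unit vector. Define w_t := det(A(t)) · ‖A(t)^{-⊤} ν‖ with A(0) = I. Then d/dt w_t |_{t=0} = tr(A'(0)) − (A'(0) ν)·ν. -/
open Matrix Asymptotics Filter Topology

attribute [local instance] Matrix.normedAddCommGroup Matrix.normedSpace

/-- Euclidean norm on `Fin d → ℝ`. -/
noncomputable def nrm {d : ℕ} (v : Fin d → ℝ) : ℝ := Real.sqrt (v ⬝ᵥ v)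


variable {d : ℕ}

lemma entry_hasDerivAt {B : ℝ → Matrix (Fin d) (Fin d) ℝ} {B' : Matrix (Fin d) (Fin d) ℝ}
    (h : HasDerivAt B B' 0) (i j : Fin d) :
    HasDerivAt (fun t => B t i j) (B' i j) 0 :=
  hasDerivAt_pi.mp (hasDerivAt_pi.mp h i) j

lemma det_hasDerivAt {B : ℝ → Matrix (Fin d) (Fin d) ℝ} {B' : Matrix (Fin d) (Fin d) ℝ}
    (h : HasDerivAt B B' 0) (h0 : B 0 = 1) :
    HasDerivAt (fun t => (B t).det) B'.trace 0 := by
  have hp : ∀ σ : Equiv.Perm (Fin d), HasDerivAt (fun t => ∏ i, B t (σ i) i)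
      (∑ k, (∏ j ∈ Finset.univ.erase k, B 0 (σ j) j) • B' (σ k) k) 0 :=
    fun σ => HasDerivAt.fun_finsetProd (fun i _ => entry_hasDerivAt h (σ i) i)
  have hsum : HasDerivAt (fun t => ∑ σ : Equiv.Perm (Fin d),
      (Equiv.Perm.sign σ : ℝ) * ∏ i, B t (σ i) i)
      (∑ σ : Equiv.Perm (Fin d), (Equiv.Perm.sign σ : ℝ) *
        ∑ k, (∏ j ∈ Finset.univ.erase k, B 0 (σ j) j) • B' (σ k) k) 0 :=
    HasDerivAt.fun_sum (fun σ _ => (hp σ).const_mul _)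
  have heq : ∀ t, (B t).det = ∑ σ : Equiv.Perm (Fin d),
      (Equiv.Perm.sign σ : ℝ) * ∏ i, B t (σ i) i := fun t => Matrix.det_apply' _
  have hval : (∑ σ : Equiv.Perm (Fin d), (Equiv.Perm.sign σ : ℝ) *
      ∑ k, (∏ j ∈ Finset.univ.erase k, B 0 (σ j) j) • B' (σ k) k) = B'.trace := by
    rw [Finset.sum_eq_single (1 : Equiv.Perm (Fin d))]
    · simp [h0, Matrix.one_apply, Matrix.trace, Matrix.diag]
    · intro σ _ hσ
      have : ∃ a, σ a ≠ a := by
        by_contra hc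
        push_neg at hc
        exact hσ (Equiv.ext hc)
      obtain ⟨a, ha⟩ := this
      have hb : σ (σ a) ≠ σ a := fun hh => ha (σ.injective hh)
      have hab : σ a ≠ a := ha
      have hzero : ∀ k : Fin d, (∏ j ∈ Finset.univ.erase k, B 0 (σ j) j) = 0 := by
        intro k
        rcases eq_or_ne k a with rfl | hka
        · refine Finset.prod_eq_zero (Finset.mem_erase.mpr ⟨hab, Finset.mem_univ _⟩) ?_
          rw [h0]; exact Matrix.one_apply_ne hb
        · refine Finset.prod_eq_zero (Finset.mem_erase.mpr ⟨fun hh => hka hh.symm, Finset.mem_univ _⟩) ?_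
          rw [h0]; exact Matrix.one_apply_ne ha
      simp [hzero]
    · simp
  have := hval ▸ hsum
  exact this.congr_deriv rfl |>.congr_of_eventuallyEq (Eventually.of_forall fun t => (heq t)) |>.congr_deriv rfl

lemma inv_hasDerivAt {B : ℝ → Matrix (Fin d) (Fin d) ℝ} {B' : Matrix (Fin d) (Fin d) ℝ}
    (h : HasDerivAt B B' 0) (h0 : B 0 = 1) (hu : ∀ t, IsUnit (B t).det) :
    HasDerivAt (fun t => (B t)⁻¹) (-B') 0 := by
  set C : ℝ → Matrix (Fin d) (Fin d) ℝ := fun t => (B t)⁻¹ with hCdef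
  have hC0 : C 0 = 1 := by simp [hCdef, h0]
  have hCB : ∀ t, C t * B t = 1 := fun t => Matrix.nonsing_inv_mul _ (hu t)
  -- continuity of C at 0
  have hRinv : ContinuousAt Ring.inverse ((B 0).det) := by
    have := NormedRing.inverse_continuousAt (1 : ℝˣ)
    simpa [h0] using this
  have hcont : ContinuousAt C 0 :=
    (continuousAt_matrix_inv (B 0) hRinv).comp h.continuousAt
  have hcont_entry : ∀ i k : Fin d, Tendsto (fun t => C t i k) (𝓝 0) (𝓝 ((1 : Matrix (Fin d) (Fin d) ℝ) i k)) := by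
    intro i k
    have : ContinuousAt (fun M : Matrix (Fin d) (Fin d) ℝ => M i k) (C 0) :=
      ((continuous_apply k).comp (continuous_apply i)).continuousAt
    have := this.comp hcont
    simpa [hC0, Function.comp_def] using this.tendsto
  -- E t = o(t)
  set E : ℝ → Matrix (Fin d) (Fin d) ℝ := fun t => B t - 1 - t • B' with hEdef
  have hE_entry : ∀ k j : Fin d, (fun t => E t k j) =o[𝓝 (0:ℝ)] fun t => t := by
    intro k j
    have := (hasDerivAt_iff_isLittleO.mp (entry_hasDerivAt h k j))
    simp only [sub_zero, h0] at this
    simpa [hEdef, Matrix.sub_apply, Matrix.smul_apply, smul_eq_mul] using this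
  -- key algebraic identity
  have key : ∀ t, C t - 1 + t • B' = -(C t * E t) - ((C t - 1) * (t • B')) := by
    intro t
    simp only [hEdef, mul_sub, mul_one, hCB t, sub_mul, one_mul, mul_smul_comm, smul_sub, smul_add, neg_smul, one_smul]
    abel
  -- entrywise littleO
  have hentry : ∀ i j : Fin d, HasDerivAt (fun t => C t i j) (-B' i j) 0 := by
    intro i j
    rw [hasDerivAt_iff_isLittleO]
    have hfun : (fun t : ℝ => C t i j - C 0 i j - (t - 0) • (-B' i j))
        = fun t => (-(C t * E t) - ((C t - 1) * (t • B'))) i j := by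
      funext t
      have := congrFun (congrFun (key t) i) j
      simp only [Matrix.sub_apply, Matrix.add_apply, Matrix.smul_apply, Matrix.neg_apply,
        smul_eq_mul, hC0] at this ⊢
      linarith [this]
    rw [hfun]
    have h1 : (fun t => (C t * E t) i j) =o[𝓝 (0:ℝ)] fun t => t := by
      simp only [Matrix.mul_apply]
      refine IsLittleO.fun_sum fun k _ => ?_
      have hO : (fun t => C t i k) =O[𝓝 (0:ℝ)] fun _ => (1:ℝ) :=
        (hcont_entry i k).isBigO_one ℝ
      simpa using hO.mul_isLittleO (hE_entry k j)
    have h2 : (fun t => ((C t - 1) * (t • B')) i j) =o[𝓝 (0:ℝ)] fun t => t := by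
      simp only [Matrix.mul_apply, Matrix.sub_apply, Matrix.smul_apply, smul_eq_mul]
      refine IsLittleO.fun_sum fun k _ => ?_
      have ho : (fun t => (C t i k - (1 : Matrix (Fin d) (Fin d) ℝ) i k)) =o[𝓝 (0:ℝ)] fun _ => (1:ℝ) := by
        rw [isLittleO_one_iff]
        have := (hcont_entry i k).sub (tendsto_const_nhds (x := (1 : Matrix (Fin d) (Fin d) ℝ) i k))
        simpa using this
      have hOB : (fun t : ℝ => t * B' k j) =O[𝓝 (0:ℝ)] fun t => t := by
        simpa [mul_comm] using (isBigO_refl (fun t : ℝ => t) (𝓝 (0:ℝ))).const_mul_left (B' k j)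
      simpa using ho.mul_isBigO hOB
    have := (h1.neg_left.sub h2)
    simpa [sub_zero] using this
  exact hasDerivAt_pi.mpr fun i => hasDerivAt_pi.mpr fun j => hentry i j

theorem stmt7 (d : ℕ) (A : ℝ → Matrix (Fin d) (Fin d) ℝ)
    (A' : Matrix (Fin d) (Fin d) ℝ)
    (hdiff : Differentiable ℝ A) (hinv : ∀ t, IsUnit (A t).det)
    (hA0 : A 0 = 1) (hA : HasDerivAt A A' 0)
    (ν : Fin d → ℝ) (hν : ν ⬝ᵥ ν = 1) :
    HasDerivAt (fun t => (A t).det * nrm (((A t)ᵀ)⁻¹ *ᵥ ν))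
      (A'.trace - (A' *ᵥ ν) ⬝ᵥ ν) 0 := by
  have hT : HasDerivAt (fun t => (A t)ᵀ) A'ᵀ 0 :=
    hasDerivAt_pi.mpr fun i => hasDerivAt_pi.mpr fun j => entry_hasDerivAt hA j i
  have hT0 : (fun t => (A t)ᵀ) 0 = 1 := by simp [hA0]
  have hTu : ∀ t, IsUnit ((A t)ᵀ).det := fun t => by
    simpa [Matrix.det_transpose] using hinv t
  have hC := inv_hasDerivAt hT hT0 hTu
  set v : ℝ → Fin d → ℝ := fun t => ((A t)ᵀ)⁻¹ *ᵥ ν with hvdef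
  have hv0 : v 0 = ν := by simp [hvdef, hA0]
  set w : Fin d → ℝ := (-A'ᵀ) *ᵥ ν with hwdef
  have hvi : ∀ i, HasDerivAt (fun t => v t i) (w i) 0 := by
    intro i
    have hvt : ∀ t, v t i = ∑ j, ((A t)ᵀ)⁻¹ i j * ν j := by
      intro t; simp [hvdef, Matrix.mulVec, dotProduct]
    have hw : w i = ∑ j, (-A'ᵀ) i j * ν j := by
      simp [hwdef, Matrix.mulVec, dotProduct]
    rw [hw]
    exact (HasDerivAt.fun_sum fun j _ => (entry_hasDerivAt hC i j).mul_const (ν j)).congr_of_eventuallyEq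
      (Filter.Eventually.of_forall fun t => hvt t)
  have hq : HasDerivAt (fun t => v t ⬝ᵥ v t) (∑ i, (w i * ν i + ν i * w i)) 0 := by
    have hsum : HasDerivAt (fun t => ∑ i, v t i * v t i) (∑ i, (w i * v 0 i + v 0 i * w i)) 0 :=
      HasDerivAt.fun_sum fun i _ => (hvi i).mul (hvi i)
    rw [hv0] at hsum
    exact hsum.congr_of_eventuallyEq (Filter.Eventually.of_forall fun t => rfl)
  have hq0 : v 0 ⬝ᵥ v 0 = 1 := by rw [hv0]; exact hν
  have hsqrt : HasDerivAt (fun t => nrm (v t))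
      ((1/(2*Real.sqrt 1)) * ∑ i, (w i * ν i + ν i * w i)) 0 := by
    have h1 : HasDerivAt Real.sqrt (1/(2*Real.sqrt 1)) ((fun t => v t ⬝ᵥ v t) 0) := by
      rw [show (fun t => v t ⬝ᵥ v t) 0 = 1 from hq0]
      exact Real.hasDerivAt_sqrt one_ne_zero
    have := h1.comp 0 hq
    simpa [nrm, Function.comp_def] using this
  have hdet := det_hasDerivAt hA hA0
  have final := hdet.mul hsqrt
  have hwv : w ⬝ᵥ ν = -((A' *ᵥ ν) ⬝ᵥ ν) := by
    simp only [hwdef, dotProduct, Matrix.mulVec, Matrix.neg_apply,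
      Matrix.transpose_apply, Finset.sum_mul, neg_mul, Finset.sum_neg_distrib]
    rw [Finset.sum_comm]
    congr 1
    exact Finset.sum_congr rfl fun y _ => Finset.sum_congr rfl fun x _ => by ring
  have hval : A'.trace * nrm (v 0) + (A 0).det *
      ((1/(2*Real.sqrt 1)) * ∑ i, (w i * ν i + ν i * w i)) = A'.trace - (A' *ᵥ ν) ⬝ᵥ ν := by
    have hsum2 : (∑ i, (w i * ν i + ν i * w i)) = 2 * (w ⬝ᵥ ν) := by
      simp [Finset.sum_add_distrib, dotProduct, two_mul, mul_comm]
    rw [hsum2, hwv, hv0, hA0]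
    simp [nrm, hν, Real.sqrt_one]
    ring
  rw [hval] at final
  exact final
end

section
/- Let ν, τ ∈ ℝ³ be orthonormal and μ = ν × τ, so (ν, τ, μ) is a positively oriented orthonormal frame. Let F be an invertible 3×3 matrix with det F > 0, and define ν^F, τ^F, μ^F := A μ/‖Aμ‖ as above with A = (I − ν^F⊗ν^F)F^{-⊤}. Then det(ν^F, τ^F, μ^F) = det(F^{-⊤}) ‖Fτ‖ / (‖F^{-⊤}ν‖ ‖Aμ‖) > 0; in particular (ν^F, τ^F, μ^F) is positively oriented, hence μ^F = ν^F × τ^F. -/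
open Matrix
open scoped Matrix

lemma dot_self_nonneg' (v : Fin 3 → ℝ) : 0 ≤ v ⬝ᵥ v :=
  Finset.sum_nonneg fun _ _ => mul_self_nonneg _

lemma nrm_sq (v : Fin 3 → ℝ) : nrm v ^ 2 = v ⬝ᵥ v := Real.sq_sqrt (dot_self_nonneg' v)

lemma nrm_pos {v : Fin 3 → ℝ} (h : v ≠ 0) : 0 < nrm v :=
  Real.sqrt_pos.2 ((dot_self_nonneg' v).lt_of_ne' (fun h0 => h (dotProduct_self_eq_zero.1 h0)))

lemma cyc (u v w : Fin 3 → ℝ) : u ⬝ᵥ (v ⨯₃ w) = w ⬝ᵥ (u ⨯₃ v) := by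
  simp [cross_apply, dotProduct, Fin.sum_univ_three]; ring

lemma smul_triple (x y z : Fin 3 → ℝ) (p q r : ℝ) :
    (p • x) ⬝ᵥ ((q • y) ⨯₃ (r • z)) = p * q * r * (x ⬝ᵥ (y ⨯₃ z)) := by
  simp [cross_apply, dotProduct, Fin.sum_univ_three]; ring

lemma triple_sub_smul (x y z : Fin 3 → ℝ) (t : ℝ) :
    x ⬝ᵥ (y ⨯₃ (z - t • x)) = x ⬝ᵥ (y ⨯₃ z) := by
  simp [cross_apply, dotProduct, Fin.sum_univ_three]; ring

lemma mulVec_triple (M : Matrix (Fin 3) (Fin 3) ℝ) (x y z : Fin 3 → ℝ) :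
    (M *ᵥ x) ⬝ᵥ ((M *ᵥ y) ⨯₃ (M *ᵥ z)) = M.det * (x ⬝ᵥ (y ⨯₃ z)) := by
  simp [cross_apply, dotProduct, Fin.sum_univ_three, Matrix.mulVec, Matrix.det_fin_three]; ring

lemma quad (a b c d : Fin 3 → ℝ) :
    a ⬝ᵥ (b ⨯₃ (c ⨯₃ d)) = (a ⬝ᵥ c) * (b ⬝ᵥ d) - (a ⬝ᵥ d) * (b ⬝ᵥ c) := by
  simp [cross_apply, dotProduct, Fin.sum_univ_three]; ring

lemma gram (u v w : Fin 3 → ℝ) :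
    (w ⬝ᵥ (u ⨯₃ v))^2 = (u ⬝ᵥ u)*(v ⬝ᵥ v)*(w ⬝ᵥ w) + 2*((u ⬝ᵥ v)*(v ⬝ᵥ w)*(u ⬝ᵥ w))
      - (u ⬝ᵥ u)*(v ⬝ᵥ w)^2 - (v ⬝ᵥ v)*(u ⬝ᵥ w)^2 - (w ⬝ᵥ w)*(u ⬝ᵥ v)^2 := by
  simp [cross_apply, dotProduct, Fin.sum_univ_three]; ring

lemma lagrange (u v : Fin 3 → ℝ) :
    (u ⨯₃ v) ⬝ᵥ (u ⨯₃ v) = (u ⬝ᵥ u) * (v ⬝ᵥ v) - (u ⬝ᵥ v)^2 := by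
  simp [cross_apply, dotProduct, Fin.sum_univ_three]; ring

lemma vecMulVec_mulVec' (u v w : Fin 3 → ℝ) :
    (vecMulVec u v) *ᵥ w = (v ⬝ᵥ w) • u := by
  funext i; simp [Matrix.vecMulVec, Matrix.mulVec, dotProduct, Fin.sum_univ_three]; ring

lemma sub_dot_sub (x y : Fin 3 → ℝ) :
    (x - y) ⬝ᵥ (x - y) = x ⬝ᵥ x - 2 * (x ⬝ᵥ y) + y ⬝ᵥ y := by
  simp [dotProduct, Fin.sum_univ_three]; ring

lemma transpose_dot (M : Matrix (Fin 3) (Fin 3) ℝ) (x y : Fin 3 → ℝ) :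
    (Mᵀ *ᵥ x) ⬝ᵥ y = x ⬝ᵥ (M *ᵥ y) := by
  simp [Matrix.mulVec, dotProduct, Fin.sum_univ_three]; ring

set_option maxHeartbeats 1000000 in
theorem stmt9 (ν τ : Fin 3 → ℝ) (hν : ν ⬝ᵥ ν = 1) (hτ : τ ⬝ᵥ τ = 1)
    (hortho : ν ⬝ᵥ τ = 0) (μ : Fin 3 → ℝ) (hμ : μ = ν ⨯₃ τ)
    (F : Matrix (Fin 3) (Fin 3) ℝ) (hF : 0 < F.det)
    (νF τF μF : Fin 3 → ℝ) (A : Matrix (Fin 3) (Fin 3) ℝ)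
    (hνF : νF = (nrm ((Fᵀ)⁻¹ *ᵥ ν))⁻¹ • ((Fᵀ)⁻¹ *ᵥ ν))
    (hτF : τF = (nrm (F *ᵥ τ))⁻¹ • (F *ᵥ τ))
    (hA : A = (1 - vecMulVec νF νF) * (Fᵀ)⁻¹)
    (hAμ : A *ᵥ μ ≠ 0)
    (hμF : μF = (nrm (A *ᵥ μ))⁻¹ • (A *ᵥ μ)) :
    Matrix.det (Matrix.of fun i j => ![νF, τF, μF] j i) =
      ((Fᵀ)⁻¹).det * nrm (F *ᵥ τ) / (nrm ((Fᵀ)⁻¹ *ᵥ ν) * nrm (A *ᵥ μ)) ∧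
    0 < Matrix.det (Matrix.of fun i j => ![νF, τF, μF] j i) ∧
    μF = νF ⨯₃ τF := by
  have hFdet : IsUnit F.det := isUnit_iff_ne_zero.2 (ne_of_gt hF)
  have hFTdet : IsUnit (Fᵀ).det := by rwa [Matrix.det_transpose]
  set B : Matrix (Fin 3) (Fin 3) ℝ := (Fᵀ)⁻¹ with hBdef
  have hB1 : Fᵀ * B = 1 := Matrix.mul_nonsing_inv _ hFTdet
  have hB2 : B * Fᵀ = 1 := Matrix.nonsing_inv_mul _ hFTdet
  have hFinv : F⁻¹ * F = 1 := Matrix.nonsing_inv_mul _ hFdet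
  -- recovery
  have hrecν : Fᵀ *ᵥ (B *ᵥ ν) = ν := by
    rw [Matrix.mulVec_mulVec, hB1, Matrix.one_mulVec]
  have hrecτ : F⁻¹ *ᵥ (F *ᵥ τ) = τ := by
    rw [Matrix.mulVec_mulVec, hFinv, Matrix.one_mulVec]
  have hνne : ν ≠ 0 := by intro h; rw [h] at hν; simp at hν
  have hτne : τ ≠ 0 := by intro h; rw [h] at hτ; simp at hτ
  have hBνne : B *ᵥ ν ≠ 0 := by
    intro h; apply hνne; rw [← hrecν, h, Matrix.mulVec_zero]
  have hFτne : F *ᵥ τ ≠ 0 := by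
    intro h; apply hτne; rw [← hrecτ, h, Matrix.mulVec_zero]
  set a := nrm (B *ᵥ ν) with hadef
  set b := nrm (F *ᵥ τ) with hbdef
  set c := nrm (A *ᵥ μ) with hcdef
  have ha : 0 < a := nrm_pos hBνne
  have hb : 0 < b := nrm_pos hFτne
  have hc : 0 < c := nrm_pos hAμ
  -- key duality
  have key : ∀ u w : Fin 3 → ℝ, (B *ᵥ u) ⬝ᵥ (F *ᵥ w) = u ⬝ᵥ w := by
    intro u w
    have h := transpose_dot F (B *ᵥ u) w
    rw [Matrix.mulVec_mulVec, hB1, Matrix.one_mulVec] at h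
    exact h.symm
  -- A applied to μ
  set g : Fin 3 → ℝ := B *ᵥ μ with hgdef
  set s : ℝ := νF ⬝ᵥ g with hsdef
  have hAμeq : A *ᵥ μ = g - s • νF := by
    rw [hA, ← Matrix.mulVec_mulVec, Matrix.sub_mulVec, Matrix.one_mulVec,
      vecMulVec_mulVec', ← hgdef, hsdef]
  -- unit norms
  have hBνsq : (B *ᵥ ν) ⬝ᵥ (B *ᵥ ν) = a ^ 2 := (nrm_sq _).symm
  have hFτsq : (F *ᵥ τ) ⬝ᵥ (F *ᵥ τ) = b ^ 2 := (nrm_sq _).symm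
  have hAμsq : (A *ᵥ μ) ⬝ᵥ (A *ᵥ μ) = c ^ 2 := (nrm_sq _).symm
  have hνF1 : νF ⬝ᵥ νF = 1 := by
    rw [hνF, smul_dotProduct, dotProduct_smul, hBνsq, smul_eq_mul, smul_eq_mul]
    field_simp
  have hτF1 : τF ⬝ᵥ τF = 1 := by
    rw [hτF, smul_dotProduct, dotProduct_smul, hFτsq, smul_eq_mul, smul_eq_mul]
    field_simp
  have hμF1 : μF ⬝ᵥ μF = 1 := by
    rw [hμF, smul_dotProduct, dotProduct_smul, hAμsq, smul_eq_mul, smul_eq_mul]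
    field_simp
  -- orthogonality
  have hντF : νF ⬝ᵥ τF = 0 := by
    rw [hνF, hτF, smul_dotProduct, dotProduct_smul, key ν τ, hortho]
    simp
  have hμτ : μ ⬝ᵥ τ = 0 := by
    subst hμ; simp [cross_apply, dotProduct, Fin.sum_univ_three]; ring
  have hνAμ : νF ⬝ᵥ (A *ᵥ μ) = 0 := by
    rw [hAμeq, dotProduct_sub, dotProduct_smul, hνF1, smul_eq_mul, mul_one, ← hsdef,
      sub_self]
  have hτAμ : τF ⬝ᵥ (A *ᵥ μ) = 0 := by
    have hτg : τF ⬝ᵥ g = 0 := by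
      rw [hτF, hgdef, smul_dotProduct, dotProduct_comm, key μ τ, hμτ]
      simp
    have hτν : τF ⬝ᵥ νF = 0 := by rw [dotProduct_comm]; exact hντF
    rw [hAμeq, dotProduct_sub, dotProduct_smul, hτν, hτg, smul_eq_mul, mul_zero, sub_self]
  have hνμF : νF ⬝ᵥ μF = 0 := by
    rw [hμF, dotProduct_smul, hνAμ, smul_eq_mul, mul_zero]
  have hτμF : τF ⬝ᵥ μF = 0 := by
    rw [hμF, dotProduct_smul, hτAμ, smul_eq_mul, mul_zero]
  -- determinant
  set D : ℝ := Matrix.det (Matrix.of fun i j => ![νF, τF, μF] j i) with hDdef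
  have hDt : D = Matrix.det ![νF, τF, μF] := by
    rw [hDdef, ← Matrix.det_transpose ![νF, τF, μF]]
    rfl
  have hD3 : D = νF ⬝ᵥ (τF ⨯₃ μF) := by rw [hDt, triple_product_eq_det]
  -- value of determinant
  have hdetB : B.det = (F.det)⁻¹ := by
    rw [hBdef, Matrix.det_nonsing_inv, Matrix.det_transpose, Ring.inverse_eq_inv']
  have hdetBpos : 0 < B.det := by rw [hdetB]; positivity
  have hT : (B *ᵥ ν) ⬝ᵥ ((F *ᵥ τ) ⨯₃ (A *ᵥ μ)) = B.det * b ^ 2 := by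
    have h1 : A *ᵥ μ = g - (s * a⁻¹) • (B *ᵥ ν) := by
      rw [hAμeq, hνF, smul_smul]
    rw [h1, triple_sub_smul]
    have hFτ : F *ᵥ τ = B *ᵥ (Fᵀ *ᵥ (F *ᵥ τ)) := by
      rw [Matrix.mulVec_mulVec, Matrix.mulVec_mulVec, hB2, Matrix.one_mul]
    conv_lhs => rw [hFτ, hgdef]
    rw [mulVec_triple, hμ, quad, hν, hortho, transpose_dot, hFτsq]
    ring
  have hDval : D = B.det * b / (a * c) := by
    rw [hD3, hνF, hτF, hμF, smul_triple, hT]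
    field_simp
  have hDpos : 0 < D := by
    rw [hDval]; positivity
  refine ⟨hDval, hDpos, ?_⟩
  -- cross product identity
  have hDc : D = μF ⬝ᵥ (νF ⨯₃ τF) := by rw [hD3, cyc]
  have hD2 : D ^ 2 = 1 := by
    rw [hD3, gram τF μF νF, hνF1, hτF1, hμF1, hτμF, dotProduct_comm μF νF, hνμF,
      dotProduct_comm τF νF, hντF]
    ring
  have hD1 : D = 1 := by
    have h : (D - 1) * (D + 1) = 0 := by linear_combination hD2
    rcases mul_eq_zero.1 h with h1 | h1
    · linarith
    · linarith
  have hcc : (νF ⨯₃ τF) ⬝ᵥ (νF ⨯₃ τF) = 1 := by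
    rw [lagrange, hνF1, hτF1, hντF]; ring
  have hdiff : (μF - νF ⨯₃ τF) ⬝ᵥ (μF - νF ⨯₃ τF) = 0 := by
    rw [sub_dot_sub, hμF1, ← hDc, hD1, hcc]; ring
  exact sub_eq_zero.1 (dotProduct_self_eq_zero.1 hdiff)
end

section
/- Let T_t(x) = x + t X(x), X ∈ C¹, and at a fixed point let ν be the unit normal with tangential projection P = I − ν⊗ν. Define A(t)^⊤ = (∂T_t)^{-1}(I − ν^t ⊗ ν^t) where ν^t = (∂T_t)^{-⊤}ν/‖(∂T_t)^{-⊤}ν‖. Then A(0)^⊤ = I − ν⊗ν and d/dt A(t)^⊤|_{t=0} = −∂X(I − ν⊗ν) + (∂^S X)^⊤ν ⊗ ν + ν ⊗ (∂^S X)^⊤ν, where ∂^S X := ∂X (I − ν⊗ν). -/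
open Matrix
open Asymptotics Filter

attribute [local instance] Matrix.normedAddCommGroup Matrix.normedSpace

private lemma hasDerivAt_matrix {f : ℝ → Matrix (Fin 3) (Fin 3) ℝ}
    {f' : Matrix (Fin 3) (Fin 3) ℝ} {x : ℝ} :
    HasDerivAt f f' x ↔ ∀ i j, HasDerivAt (fun t => f t i j) (f' i j) x :=
  ⟨fun h i j => hasDerivAt_pi.1 (hasDerivAt_pi.1 h i) j,
   fun h => hasDerivAt_pi.2 fun i => hasDerivAt_pi.2 fun j => h i j⟩

private lemma hasDerivAt_matmul {f g : ℝ → Matrix (Fin 3) (Fin 3) ℝ}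
    {f' g' : Matrix (Fin 3) (Fin 3) ℝ} {x : ℝ}
    (hf : HasDerivAt f f' x) (hg : HasDerivAt g g' x) :
    HasDerivAt (fun t => f t * g t) (f' * g x + f x * g') x := by
  rw [hasDerivAt_matrix] at hf hg ⊢
  intro i j
  simp only [Matrix.mul_apply, Matrix.add_apply]
  have := HasDerivAt.fun_sum (fun k (_ : k ∈ Finset.univ) => (hf i k).fun_mul (hg k j))
  simpa [Finset.sum_add_distrib] using this

private lemma hasDerivAt_inv_mat (B : Matrix (Fin 3) (Fin 3) ℝ) :
    HasDerivAt (fun t : ℝ => (1 + t • B)⁻¹) (-B) 0 := by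
  have hcontM : Continuous fun t : ℝ => (1 : Matrix (Fin 3) (Fin 3) ℝ) + t • B :=
    continuous_const.add (continuous_id.smul continuous_const)
  have hdet : ContinuousAt (fun t : ℝ => ((1 : Matrix (Fin 3) (Fin 3) ℝ) + t • B).det) 0 :=
    (hcontM.matrix_det).continuousAt
  have hdet0 : ((1 : Matrix (Fin 3) (Fin 3) ℝ) + (0:ℝ) • B).det = 1 := by simp
  have hev : ∀ᶠ t in nhds (0:ℝ), IsUnit ((1 : Matrix (Fin 3) (Fin 3) ℝ) + t • B).det := by
    have := hdet.eventually_ne (by rw [hdet0]; exact one_ne_zero)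
    exact this.mono fun t ht => isUnit_iff_ne_zero.2 ht
  have hN0 : ((1 : Matrix (Fin 3) (Fin 3) ℝ) + (0:ℝ) • B)⁻¹ = 1 := by simp
  have hNA : ContinuousAt (fun t : ℝ => (1 + t • B)⁻¹) 0 := by
    have h1 : ContinuousAt Ring.inverse (((1 : Matrix (Fin 3) (Fin 3) ℝ) + (0:ℝ) • B).det) := by
      rw [hdet0, Ring.inverse_eq_inv']
      exact continuousAt_inv₀ one_ne_zero
    exact ContinuousAt.comp (f := fun t : ℝ => (1 : Matrix (Fin 3) (Fin 3) ℝ) + t • B)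
      (g := Inv.inv) (x := (0:ℝ)) (continuousAt_matrix_inv _ h1) hcontM.continuousAt
  refine hasDerivAt_iff_isLittleO.2 ?_
  have key : ∀ t : ℝ, IsUnit ((1 : Matrix (Fin 3) (Fin 3) ℝ) + t • B).det →
      (1 + t • B)⁻¹ - (1 + (0:ℝ) • B)⁻¹ - (t - 0) • (-B)
        = (t * t) • ((1 + t • B)⁻¹ * (B * B)) := by
    intro t hu
    have h1 : ((1 : Matrix (Fin 3) (Fin 3) ℝ) + t • B)⁻¹ * (1 + t • B) = 1 :=
      Matrix.nonsing_inv_mul _ hu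
    have h2 : ((1 : Matrix (Fin 3) (Fin 3) ℝ) + t • B) * (1 - t • B)
        = 1 - (t * t) • (B * B) := by
      have hsq : (t • B) * (t • B) = (t * t) • (B * B) := by
        rw [smul_mul_assoc, mul_smul_comm, smul_smul]
      rw [add_mul, one_mul, mul_sub, mul_one, hsq]
      abel
    have h3 : (1 + t • B)⁻¹ - (t * t) • ((1 + t • B)⁻¹ * (B * B)) = 1 - t • B := by
      calc (1 + t • B)⁻¹ - (t * t) • ((1 + t • B)⁻¹ * (B * B))
          = (1 + t • B)⁻¹ * (1 - (t * t) • (B * B)) := by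
            rw [mul_sub, mul_one, mul_smul_comm]
        _ = (1 + t • B)⁻¹ * ((1 + t • B) * (1 - t • B)) := by rw [h2]
        _ = ((1 + t • B)⁻¹ * (1 + t • B)) * (1 - t • B) := by rw [mul_assoc]
        _ = 1 - t • B := by rw [h1, one_mul]
    have h4 : ((1 : Matrix (Fin 3) (Fin 3) ℝ) + t • B)⁻¹
        = (1 - t • B) + (t * t) • ((1 + t • B)⁻¹ * (B * B)) :=
      sub_eq_iff_eq_add.mp h3
    rw [hN0]
    nth_rewrite 1 [h4]
    simp only [sub_zero, smul_neg]
    abel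
  have heq : (fun t : ℝ => (1 + t • B)⁻¹ - (1 + (0:ℝ) • B)⁻¹ - (t - 0) • (-B))
      =ᶠ[nhds (0:ℝ)] fun t => (t * t) • ((1 + t • B)⁻¹ * (B * B)) := hev.mono key
  have hbound : (fun t : ℝ => (1 + t • B)⁻¹ * (B * B)) =O[nhds (0:ℝ)] (fun _ => (1:ℝ)) := by
    have hc : ContinuousAt (fun t : ℝ => (1 + t • B)⁻¹ * (B * B)) 0 :=
      ((Continuous.matrix_mul continuous_id continuous_const).continuousAt).comp hNA
    exact Filter.Tendsto.isBigO_one (F := ℝ) hc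
  have hlo : (fun t : ℝ => t * t) =o[nhds (0:ℝ)] fun t : ℝ => t := by
    have h1 : (fun t : ℝ => t) =o[nhds (0:ℝ)] (fun _ => (1:ℝ)) :=
      (isLittleO_one_iff ℝ).mpr (by simpa using (continuous_id'.tendsto (0:ℝ)))
    simpa using h1.mul_isBigO (isBigO_refl (fun t : ℝ => t) _)
  have final : (fun t : ℝ => (t * t) • ((1 + t • B)⁻¹ * (B * B))) =o[nhds (0:ℝ)]
      fun t : ℝ => t - 0 := by
    have := hlo.smul_isBigO hbound
    simpa using this
  exact final.congr' heq.symm (by rfl)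

private lemma outer_nrm {d : ℕ} (v : Fin d → ℝ) :
    vecMulVec ((nrm v)⁻¹ • v) ((nrm v)⁻¹ • v) = (v ⬝ᵥ v)⁻¹ • vecMulVec v v := by
  have hnn : (0:ℝ) ≤ v ⬝ᵥ v := Finset.sum_nonneg fun k _ => mul_self_nonneg _
  have key : (nrm v)⁻¹ * (nrm v)⁻¹ = (v ⬝ᵥ v)⁻¹ := by
    rw [← mul_inv]; unfold nrm; rw [Real.mul_self_sqrt hnn]
  ext i j
  simp only [Matrix.vecMulVec_apply, Pi.smul_apply, smul_eq_mul, Matrix.smul_apply]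
  rw [← key]; ring

theorem stmt10 (B : Matrix (Fin 3) (Fin 3) ℝ) (ν : Fin 3 → ℝ) (hν : ν ⬝ᵥ ν = 1)
    (A : ℝ → Matrix (Fin 3) (Fin 3) ℝ)
    (hA : ∀ t, A t = (1 + t • B)⁻¹ *
      (1 - vecMulVec ((nrm (((1 + t • B)ᵀ)⁻¹ *ᵥ ν))⁻¹ • (((1 + t • B)ᵀ)⁻¹ *ᵥ ν))
                     ((nrm (((1 + t • B)ᵀ)⁻¹ *ᵥ ν))⁻¹ • (((1 + t • B)ᵀ)⁻¹ *ᵥ ν)))) :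
    A 0 = 1 - vecMulVec ν ν ∧
    HasDerivAt A (-(B * (1 - vecMulVec ν ν))
      + vecMulVec ((B * (1 - vecMulVec ν ν))ᵀ *ᵥ ν) ν
      + vecMulVec ν ((B * (1 - vecMulVec ν ν))ᵀ *ᵥ ν)) 0 := by
  have hN := hasDerivAt_inv_mat B
  have hNe := hasDerivAt_matrix.1 hN
  have hw : HasDerivAt (fun t : ℝ => ((1 + t • B)⁻¹)ᵀ *ᵥ ν) ((-B)ᵀ *ᵥ ν) 0 := by
    apply hasDerivAt_pi.2
    intro i
    simp only [Matrix.mulVec, dotProduct, Matrix.transpose_apply]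
    exact HasDerivAt.fun_sum fun k _ => (hNe k i).mul_const (ν k)
  have hw0 : ((1 + (0:ℝ) • B)⁻¹)ᵀ *ᵥ ν = ν := by simp
  have hwp := hasDerivAt_pi.1 hw
  have hq : HasDerivAt (fun t : ℝ => (((1 + t • B)⁻¹)ᵀ *ᵥ ν) ⬝ᵥ (((1 + t • B)⁻¹)ᵀ *ᵥ ν))
      (((-B)ᵀ *ᵥ ν) ⬝ᵥ ν + ν ⬝ᵥ ((-B)ᵀ *ᵥ ν)) 0 := by
    simp only [dotProduct]
    have h2 := HasDerivAt.fun_sum (fun i (_ : i ∈ Finset.univ) => (hwp i).fun_mul (hwp i))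
    simp only [hw0] at h2
    rw [Finset.sum_add_distrib] at h2
    exact h2
  have hq0 : ((((1 + (0:ℝ) • B)⁻¹)ᵀ *ᵥ ν) ⬝ᵥ (((1 + (0:ℝ) • B)⁻¹)ᵀ *ᵥ ν)) ≠ 0 := by
    rw [hw0, hν]; exact one_ne_zero
  have hqinv := hq.inv hq0
  have hP : HasDerivAt
      (fun t : ℝ => vecMulVec (((1 + t • B)⁻¹)ᵀ *ᵥ ν) (((1 + t • B)⁻¹)ᵀ *ᵥ ν))
      (vecMulVec ((-B)ᵀ *ᵥ ν) ν + vecMulVec ν ((-B)ᵀ *ᵥ ν)) 0 := by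
    rw [hasDerivAt_matrix]
    intro i j
    have h2 := (hwp i).fun_mul (hwp j)
    simp only [hw0] at h2
    simpa [Matrix.vecMulVec_apply] using h2
  have hsm := HasDerivAt.smul hqinv hP
  have hG := HasDerivAt.const_sub (1 : Matrix (Fin 3) (Fin 3) ℝ) hsm
  have hAt := hasDerivAt_matmul hN hG
  have hAfun : A = fun t => (1 + t • B)⁻¹ *
      (1 - ((((1 + t • B)⁻¹)ᵀ *ᵥ ν) ⬝ᵥ (((1 + t • B)⁻¹)ᵀ *ᵥ ν))⁻¹ •
        vecMulVec (((1 + t • B)⁻¹)ᵀ *ᵥ ν) (((1 + t • B)⁻¹)ᵀ *ᵥ ν)) := by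
    funext t
    rw [hA t, ← Matrix.transpose_nonsing_inv, outer_nrm]
  rw [hAfun]
  constructor
  · simp [hν]
  · simp only [zero_smul, add_zero, Matrix.transpose_one, Matrix.one_mulVec,
      hν, inv_one, Pi.inv_apply, Pi.smul_apply', one_pow, div_one, one_smul, one_mul] at hAt
    refine hAt.congr_deriv ?_
    ext i j
    simp only [Matrix.add_apply, Matrix.sub_apply, Matrix.neg_apply, Matrix.smul_apply,
      Matrix.mul_apply, Matrix.one_apply, Matrix.vecMulVec_apply, Matrix.transpose_apply,
      Matrix.mulVec, dotProduct, Pi.neg_apply, Pi.smul_apply, smul_eq_mul,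
      Fin.sum_univ_three]
    fin_cases i <;> fin_cases j <;> simp <;> ring
end
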